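/- Let (U, V) be a bivariate Gaussian vector with mean (μ₁, μ₂) and positive correlation structure, and let Y₁ | U ~ Poisson(exp(U)), Y₂ | V ~ Poisson(exp(V)) be conditionally independent. Then Cov(Y₁, Y₂) = exp(μ₁ + σ₁²/2)·exp(μ₂ + σ₂²/2)·(exp(σ₁₂) − 1), where σ₁², σ₂², σ₁₂ are the variances and covariance of (U, V). In particular, the sign of Cov(Y₁, Y₂) equals the sign of σ₁₂. -/
import Mathlib

open scoped Classical
open MeasureTheory Real

/-- Covariance in the bivariate Poisson log-normal model: if `(U,V)` is bivariate
Gaussian with means `μ₁, μ₂`, variances `σ₁², σ₂²` and covariance `σ₁₂` (characterized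
by its moment generating function), and `Y₁ | U ~ Poisson(exp U)`,
`Y₂ | V ~ Poisson(exp V)` are conditionally independent given `(U,V)` — so that
`E[Y₁ | U,V] = exp U`, `E[Y₂ | U,V] = exp V` and `E[Y₁Y₂ | U,V] = exp(U+V)` — then
`Cov(Y₁,Y₂) = exp(μ₁+σ₁²/2)·exp(μ₂+σ₂²/2)·(exp σ₁₂ − 1)`, whose sign is the sign
of `σ₁₂`. -/
theorem poisson_lognormal_covariance
    {Ω : Type*} [MeasurableSpace Ω] (P : Measure Ω) [IsProbabilityMeasure P]
    (U V : Ω → ℝ) (hU : Measurable U) (hV : Measurable V)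
    (Y₁ Y₂ : Ω → ℕ) (hY₁m : Measurable Y₁) (hY₂m : Measurable Y₂)
    (μ₁ μ₂ σ₁sq σ₂sq σ₁₂ : ℝ)
    (hmgf : ∀ s t : ℝ,
      ∫ ω, Real.exp (s * U ω + t * V ω) ∂P
        = Real.exp (s * μ₁ + t * μ₂
            + (s ^ 2 * σ₁sq + 2 * s * t * σ₁₂ + t ^ 2 * σ₂sq) / 2))
    (hY₁ : P[(fun ω => (Y₁ ω : ℝ)) |
        MeasurableSpace.comap (fun ω => (U ω, V ω)) inferInstance]
      =ᵐ[P] fun ω => Real.exp (U ω))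
    (hY₂ : P[(fun ω => (Y₂ ω : ℝ)) |
        MeasurableSpace.comap (fun ω => (U ω, V ω)) inferInstance]
      =ᵐ[P] fun ω => Real.exp (V ω))
    (hY₁₂ : P[(fun ω => ((Y₁ ω : ℝ) * (Y₂ ω : ℝ))) |
        MeasurableSpace.comap (fun ω => (U ω, V ω)) inferInstance]
      =ᵐ[P] fun ω => Real.exp (U ω + V ω))
    (hint₁ : Integrable (fun ω => (Y₁ ω : ℝ)) P)
    (hint₂ : Integrable (fun ω => (Y₂ ω : ℝ)) P)
    (hint₁₂ : Integrable (fun ω => ((Y₁ ω : ℝ) * (Y₂ ω : ℝ))) P) :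
    (∫ ω, ((Y₁ ω : ℝ) * (Y₂ ω : ℝ)) ∂P)
        - (∫ ω, (Y₁ ω : ℝ) ∂P) * (∫ ω, (Y₂ ω : ℝ) ∂P)
      = Real.exp (μ₁ + σ₁sq / 2) * Real.exp (μ₂ + σ₂sq / 2) * (Real.exp σ₁₂ - 1)
    ∧ Real.sign ((∫ ω, ((Y₁ ω : ℝ) * (Y₂ ω : ℝ)) ∂P)
        - (∫ ω, (Y₁ ω : ℝ) ∂P) * (∫ ω, (Y₂ ω : ℝ) ∂P)) = Real.sign σ₁₂ := by
  have hle : MeasurableSpace.comap (fun ω => (U ω, V ω)) inferInstance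
      ≤ ‹MeasurableSpace Ω› := (hU.prodMk hV).comap_le
  have key : ∀ (f : Ω → ℝ) (g : Ω → ℝ), Integrable f P →
      (P[f | MeasurableSpace.comap (fun ω => (U ω, V ω)) inferInstance] =ᵐ[P] g) →
      ∫ ω, f ω ∂P = ∫ ω, g ω ∂P := by
    intro f g hf hfg
    rw [← integral_condExp hle]
    exact integral_congr_ae hfg
  have h1 : ∫ ω, (Y₁ ω : ℝ) ∂P = Real.exp (μ₁ + σ₁sq / 2) := by
    rw [key _ _ hint₁ hY₁]; simpa using hmgf 1 0
  have h2 : ∫ ω, (Y₂ ω : ℝ) ∂P = Real.exp (μ₂ + σ₂sq / 2) := by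
    rw [key _ _ hint₂ hY₂]; simpa using hmgf 0 1
  have h12 : ∫ ω, ((Y₁ ω : ℝ) * (Y₂ ω : ℝ)) ∂P
      = Real.exp (μ₁ + μ₂ + (σ₁sq + 2 * σ₁₂ + σ₂sq) / 2) := by
    rw [key _ _ hint₁₂ hY₁₂]; simpa using hmgf 1 1
  have heq : (∫ ω, ((Y₁ ω : ℝ) * (Y₂ ω : ℝ)) ∂P)
        - (∫ ω, (Y₁ ω : ℝ) ∂P) * (∫ ω, (Y₂ ω : ℝ) ∂P)
      = Real.exp (μ₁ + σ₁sq / 2) * Real.exp (μ₂ + σ₂sq / 2) * (Real.exp σ₁₂ - 1) := by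
    rw [h1, h2, h12, mul_sub, mul_one, ← Real.exp_add, ← Real.exp_add]
    congr 2 <;> ring
  refine ⟨heq, ?_⟩
  rw [heq]
  have hpos : 0 < Real.exp (μ₁ + σ₁sq / 2) * Real.exp (μ₂ + σ₂sq / 2) :=
    mul_pos (Real.exp_pos _) (Real.exp_pos _)
  rcases lt_trichotomy σ₁₂ 0 with h | h | h
  · rw [Real.sign_of_neg h, Real.sign_of_neg]
    exact mul_neg_of_pos_of_neg hpos (sub_neg.2 (by simpa using Real.exp_lt_exp.mpr h))
  · simp [h]
  · rw [Real.sign_of_pos h, Real.sign_of_pos]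
    exact mul_pos hpos (sub_pos.2 (by simpa using Real.exp_lt_exp.mpr h))
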